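/- A connected graph G is reversible (H(x,y) = H(y,x) for all x, y) if and only if the quantity Σ_{u ∈ V(G)} d_u R_{vu} is independent of the vertex v, where R_{vu} is the effective resistance between v and u. -/

import Mathlib

open Matrix Finset

/-- `H` is the vector of expected hitting times of the simple random walk on `G`. -/
def IsHittingTime {V : Type*} [Fintype V] (G : SimpleGraph V) [DecidableRel G.Adj]
    (H : V → V → ℝ) : Prop :=
  (∀ y, H y y = 0) ∧
  ∀ x y, x ≠ y → H x y = 1 + (∑ z ∈ G.neighborFinset x, H z y) / (G.degree x)

section Aux

variable {V : Type*} [Fintype V] [DecidableEq V]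
  (G : SimpleGraph V) [DecidableRel G.Adj]

/-- Kernel of the Laplacian of a connected graph consists of constants. -/
lemma lapAux_ker_const (hG : G.Connected) (f : V → ℝ)
    (hf : G.lapMatrix ℝ *ᵥ f = 0) : ∀ x y : V, f x = f y := by
  have h := (G.lapMatrix_mulVec_eq_zero_iff_forall_reachable (x := f)).mp hf
  exact fun x y => h x y (hG.preconnected x y)

/-- Columns of the Laplacian sum to zero. -/
lemma lapAux_sum (f : V → ℝ) : ∑ x : V, (G.lapMatrix ℝ *ᵥ f) x = 0 := by
  have h1 : ∑ x : V, (G.lapMatrix ℝ *ᵥ f) x = (fun _ => (1:ℝ)) ⬝ᵥ (G.lapMatrix ℝ *ᵥ f) := by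
    simp [dotProduct]
  rw [h1, Matrix.dotProduct_mulVec]
  have h2 : (fun _ => (1:ℝ)) ᵥ* (G.lapMatrix ℝ) = 0 := by
    have hs : (G.lapMatrix ℝ)ᵀ = G.lapMatrix ℝ := G.isSymm_lapMatrix (R := ℝ)
    rw [← hs, Matrix.vecMul_transpose, G.lapMatrix_mulVec_const_eq_zero]
  rw [h2, zero_dotProduct]

/-- Reciprocity: for a symmetric matrix, `(Lφ)·ψ = (Lψ)·φ`. -/
lemma lapAux_reciprocity (φ ψ : V → ℝ) :
    (G.lapMatrix ℝ *ᵥ φ) ⬝ᵥ ψ = (G.lapMatrix ℝ *ᵥ ψ) ⬝ᵥ φ := by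
  have hs : (G.lapMatrix ℝ)ᵀ = G.lapMatrix ℝ := G.isSymm_lapMatrix (R := ℝ)
  rw [dotProduct_comm, Matrix.dotProduct_mulVec, ← hs, Matrix.vecMul_transpose, hs]

lemma lapAux_deg_pos (hG : G.Connected) [Nontrivial V] (x : V) : 0 < G.degree x := by
  obtain ⟨z, hz⟩ := exists_ne x
  obtain ⟨p⟩ := hG.preconnected x z
  rw [G.degree_pos_iff_exists_adj]
  cases p with
  | nil => exact absurd rfl hz
  | cons h _ => exact ⟨_, h⟩

/-- The Laplacian applied to the hitting-time vector. -/
lemma lapAux_hit (hG : G.Connected) [Nontrivial V] (H : V → V → ℝ) (hH : IsHittingTime G H)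
    (y : V) :
    G.lapMatrix ℝ *ᵥ (fun x => H x y) =
      fun x => (G.degree x : ℝ) - (∑ z : V, (G.degree z : ℝ)) * (if x = y then 1 else 0) := by
  set w := G.lapMatrix ℝ *ᵥ (fun x => H x y) with hw
  have hx : ∀ x, x ≠ y → w x = (G.degree x : ℝ) := by
    intro x hxy
    have hd : (0:ℝ) < (G.degree x : ℝ) := by
      exact_mod_cast lapAux_deg_pos G hG x
    rw [hw, G.lapMatrix_mulVec_apply, hH.2 x y hxy]
    field_simp
    ring
  have hsum : ∑ x : V, w x = 0 := lapAux_sum G _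
  funext x
  by_cases hxy : x = y
  · subst hxy
    have h1 : ∑ z : V, w z = w x + ∑ z ∈ Finset.univ.erase x, w z :=
      (Finset.add_sum_erase _ _ (Finset.mem_univ x)).symm
    have h2 : ∑ z ∈ Finset.univ.erase x, w z = ∑ z ∈ Finset.univ.erase x, (G.degree z : ℝ) :=
      Finset.sum_congr rfl (fun z hz => hx z (Finset.mem_erase.mp hz).1)
    have h3 : ∑ z : V, (G.degree z : ℝ)
        = (G.degree x : ℝ) + ∑ z ∈ Finset.univ.erase x, (G.degree z : ℝ) :=
      (Finset.add_sum_erase _ _ (Finset.mem_univ x)).symm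
    rw [h1, h2] at hsum
    rw [if_pos rfl]
    linarith
  · rw [hx x hxy, if_neg hxy, mul_zero, sub_zero]

lemma lapAux_delta_dot {V : Type*} [Fintype V] [DecidableEq V] (v u : V) (f : V → ℝ) :
    (fun z => (if z = v then (1 : ℝ) else 0) - (if z = u then (1 : ℝ) else 0)) ⬝ᵥ f
      = f v - f u := by
  simp [dotProduct, sub_mul, ite_mul, Finset.sum_sub_distrib]

end Aux

/-- $G$ is reversible iff $\sum_u d_u R_{vu}$ is independent of $v$, where
$R_{vu}$ is the effective resistance. -/
theorem reversible_iff_resistance_sum_const {V : Type*} [Fintype V] [DecidableEq V]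
    (G : SimpleGraph V) [DecidableRel G.Adj] (hG : G.Connected)
    (H : V → V → ℝ) (hH : IsHittingTime G H)
    (R : V → V → ℝ)
    (hR : ∀ v u : V, ∃ φ : V → ℝ,
      ((G.lapMatrix ℝ) *ᵥ φ =
        fun z => (if z = v then (1 : ℝ) else 0) - (if z = u then (1 : ℝ) else 0)) ∧
      R v u = φ v - φ u) :
    (∀ x y : V, H x y = H y x) ↔
      ∀ v w : V, (∑ u : V, (G.degree u : ℝ) * R v u) = ∑ u : V, (G.degree u : ℝ) * R w u := by
  rcases subsingleton_or_nontrivial V with hV | hV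
  · constructor
    · intro _ v w
      rw [Subsingleton.elim v w]
    · intro _ x y
      rw [Subsingleton.elim x y]
  obtain ⟨o⟩ : Nonempty V := hG.nonempty
  choose k hk hkR using fun u => hR u o
  have hRval : ∀ (v u : V) (φ : V → ℝ),
      (G.lapMatrix ℝ *ᵥ φ =
        fun z => (if z = v then (1 : ℝ) else 0) - (if z = u then (1 : ℝ) else 0)) →
      R v u = φ v - φ u := by
    intro v u φ hφ
    obtain ⟨ψ, hψ, hval⟩ := hR v u
    have hker : G.lapMatrix ℝ *ᵥ (φ - ψ) = 0 := by
      rw [Matrix.mulVec_sub, hφ, hψ, sub_self]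
    have h1 := lapAux_ker_const G hG _ hker v u
    simp only [Pi.sub_apply] at h1
    rw [hval]; linarith
  set K : V → V → ℝ := fun x u => k u x - k u o with hKdef
  have hLK : ∀ u, (G.lapMatrix ℝ *ᵥ fun x => K x u)
      = fun z => (if z = u then (1 : ℝ) else 0) - (if z = o then (1 : ℝ) else 0) := by
    intro u
    have hconstv : G.lapMatrix ℝ *ᵥ (fun _ => k u o) = 0 := by
      funext x
      rw [G.lapMatrix_mulVec_apply]
      simp [Finset.sum_const, SimpleGraph.card_neighborFinset_eq_degree, mul_comm]
    have hsplit : (fun x => K x u) = (k u) - (fun _ => k u o) := by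
      funext x; simp [hKdef]
    rw [hsplit, Matrix.mulVec_sub, hconstv, hk u, sub_zero]
  have hKsym : ∀ x u, K x u = K u x := by
    intro x u
    have h := lapAux_reciprocity G (k u) (k x)
    rw [hk u, hk x, lapAux_delta_dot, lapAux_delta_dot] at h
    simp only [hKdef]
    linarith
  have hRK : ∀ v u, R v u = K v v + K u u - K v u - K u v := by
    intro v u
    have hker : (G.lapMatrix ℝ *ᵥ fun x => K x v - K x u)
        = fun z => (if z = v then (1 : ℝ) else 0) - (if z = u then (1 : ℝ) else 0) := by
      have hsplit : (fun x => K x v - K x u)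
          = (fun x => K x v) - (fun x => K x u) := rfl
      rw [hsplit, Matrix.mulVec_sub, hLK v, hLK u]
      funext z; simp only [Pi.sub_apply]; ring
    have := hRval v u _ hker
    rw [this]; ring
  have hLF : ∀ y : V,
      (G.lapMatrix ℝ *ᵥ fun x =>
        (∑ u : V, (G.degree u : ℝ) * K x u) - (∑ z : V, (G.degree z : ℝ)) * K x y)
      = fun x => (G.degree x : ℝ)
          - (∑ z : V, (G.degree z : ℝ)) * (if x = y then 1 else 0) := by
    intro y
    have hdecomp : (fun x =>
        (∑ u : V, (G.degree u : ℝ) * K x u) - (∑ z : V, (G.degree z : ℝ)) * K x y)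
        = (∑ u : V, (G.degree u : ℝ) • fun x => K x u)
          - (∑ z : V, (G.degree z : ℝ)) • fun x => K x y := by
      funext x
      simp [Finset.sum_apply]
    rw [hdecomp, Matrix.mulVec_sub, Matrix.mulVec_smul, hLK y]
    have hsum : (G.lapMatrix ℝ) *ᵥ (∑ u : V, (G.degree u : ℝ) • fun x => K x u)
        = ∑ u : V, (G.degree u : ℝ) • ((G.lapMatrix ℝ) *ᵥ fun x => K x u) := by
      rw [← Matrix.mulVecLin_apply, map_sum]
      simp only [_root_.map_smul, Matrix.mulVecLin_apply]
    rw [hsum]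
    simp only [hLK]
    funext x
    simp only [Finset.sum_apply, Pi.sub_apply, Pi.smul_apply, smul_eq_mul, mul_sub,
      mul_ite, mul_one, mul_zero, Finset.sum_sub_distrib, Finset.sum_ite_eq,
      Finset.sum_ite_eq', Finset.mem_univ, if_true]
    rcases eq_or_ne x o with h | h <;> simp [h] <;> ring
  have hLH := fun y => lapAux_hit G hG H hH y
  have hHform : ∀ x y : V, H x y =
      ((∑ u : V, (G.degree u : ℝ) * K x u) - (∑ z : V, (G.degree z : ℝ)) * K x y)
      - ((∑ u : V, (G.degree u : ℝ) * K y u) - (∑ z : V, (G.degree z : ℝ)) * K y y) := by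
    intro x y
    have hker : G.lapMatrix ℝ *ᵥ ((fun x => H x y) - fun x =>
        (∑ u : V, (G.degree u : ℝ) * K x u) - (∑ z : V, (G.degree z : ℝ)) * K x y) = 0 := by
      rw [Matrix.mulVec_sub, hLH y, hLF y, sub_self]
    have hconst := lapAux_ker_const G hG _ hker x y
    simp only [Pi.sub_apply] at hconst
    have h0 : H y y = 0 := hH.1 y
    linarith
  have hgx : ∀ v : V, (∑ u : V, (G.degree u : ℝ) * R v u)
      = (∑ z : V, (G.degree z : ℝ)) * K v v + (∑ u : V, (G.degree u : ℝ) * K u u)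
        - 2 * ∑ u : V, (G.degree u : ℝ) * K v u := by
    intro v
    have h1 : ∀ u : V, (G.degree u : ℝ) * R v u
        = (G.degree u : ℝ) * K v v + (G.degree u : ℝ) * K u u
          - 2 * ((G.degree u : ℝ) * K v u) := by
      intro u; rw [hRK v u, hKsym v u]; ring
    rw [Finset.sum_congr rfl (fun u _ => h1 u), Finset.sum_sub_distrib,
      Finset.sum_add_distrib, ← Finset.sum_mul, ← Finset.mul_sum]
  have key : ∀ x y : V, H x y - H y x
      = (∑ u : V, (G.degree u : ℝ) * R y u) - (∑ u : V, (G.degree u : ℝ) * R x u) := by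
    intro x y
    rw [hHform x y, hHform y x, hgx x, hgx y, hKsym x y]
    ring
  constructor
  · intro hsym v w
    have h := key v w
    rw [hsym v w] at h
    linarith
  · intro hconst x y
    have h := key x y
    rw [hconst y x] at h
    linarith
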